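/- For any two distinct odd primes p and q, the height of Φ_{pq} equals 1. -/

import Mathlib

open Polynomial

noncomputable def cycHeight (f : Polynomial ℤ) : ℕ :=
  f.support.sup fun m => (f.coeff m).natAbs

/-- geometric series `∑ X^(p*i)` -/
noncomputable def geomS (p : ℕ) : PowerSeries ℤ :=
  PowerSeries.mk fun n => if p ∣ n then 1 else 0

lemma one_sub_pow_mul_geomS (p : ℕ) (hp : 0 < p) :
    (1 - (PowerSeries.X : PowerSeries ℤ) ^ p) * geomS p = 1 := by
  ext n
  rw [sub_mul, one_mul, map_sub, PowerSeries.coeff_X_pow_mul']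
  simp only [geomS, PowerSeries.coeff_mk, PowerSeries.coeff_one]
  by_cases h : p ≤ n
  · have h1 : p ∣ n ↔ p ∣ n - p := by
      constructor
      · intro hd; exact (Nat.dvd_sub hd dvd_rfl)
      · intro hd; have := Nat.dvd_add hd dvd_rfl; rwa [Nat.sub_add_cancel h] at this
    have h2 : n ≠ 0 := by omega
    rw [if_pos h]
    by_cases hd : p ∣ n
    · rw [if_pos hd, if_pos (h1.mp hd)]; simp [h2]
    · rw [if_neg hd, if_neg (mt h1.mpr hd)]; simp [h2]
  · have h2 : p ∣ n ↔ n = 0 := by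
      constructor
      · intro hd; rcases hd with ⟨k, rfl⟩
        rcases Nat.eq_zero_or_pos k with rfl | hk
        · simp
        · exfalso; apply h; calc p = p * 1 := (mul_one p).symm
            _ ≤ p * k := Nat.mul_le_mul_left p hk
      · rintro rfl; exact dvd_zero p
    by_cases h3 : n = 0 <;> simp [h, h2, h3, hp.ne']

lemma divisors_pq {p q : ℕ} (hp : p.Prime) (hq : q.Prime) (hne : p ≠ q) :
    (p * q).divisors = {1, p, q, p * q} := by
  ext d
  rw [Nat.mem_divisors]
  simp only [Finset.mem_insert, Finset.mem_singleton]
  constructor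
  · rintro ⟨hd, -⟩
    rcases Nat.dvd_mul.mp hd with ⟨y, z, hy, hz, rfl⟩
    rcases hp.eq_one_or_self_of_dvd y hy with rfl | rfl <;>
      rcases hq.eq_one_or_self_of_dvd z hz with rfl | rfl <;> simp
  · have hpq : p * q ≠ 0 := Nat.mul_ne_zero hp.pos.ne' hq.pos.ne'
    rintro (rfl | rfl | rfl | rfl)
    · exact ⟨one_dvd _, hpq⟩
    · exact ⟨Dvd.intro q rfl, hpq⟩
    · exact ⟨Dvd.intro_left p rfl, hpq⟩
    · exact ⟨dvd_rfl, hpq⟩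

lemma poly_id {p q : ℕ} (hp : p.Prime) (hq : q.Prime) (hne : p ≠ q) :
    cyclotomic (p * q) ℤ * ((X ^ p - 1) * (X ^ q - 1)) =
      (X ^ (p * q) - 1) * (X - 1 : Polynomial ℤ) := by
  haveI : Fact p.Prime := ⟨hp⟩
  haveI : Fact q.Prime := ⟨hq⟩
  have hppos := hp.pos
  have hqpos := hq.pos
  have h1 : (X : Polynomial ℤ) ^ p - 1 = cyclotomic p ℤ * (X - 1) :=
    (cyclotomic_prime_mul_X_sub_one ℤ p).symm
  have h2 : (X : Polynomial ℤ) ^ q - 1 = cyclotomic q ℤ * (X - 1) :=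
    (cyclotomic_prime_mul_X_sub_one ℤ q).symm
  have hprod : (X : Polynomial ℤ) ^ (p * q) - 1 =
      cyclotomic 1 ℤ * cyclotomic p ℤ * cyclotomic q ℤ * cyclotomic (p * q) ℤ := by
    rw [← prod_cyclotomic_eq_X_pow_sub_one (Nat.mul_pos hppos hqpos) ℤ,
      divisors_pq hp hq hne]
    have hp1 : p ≠ 1 := hp.ne_one
    have hq1 : q ≠ 1 := hq.ne_one
    have hppq : p ≠ p * q := by
      intro h; nlinarith [hq.two_le, hp.two_le]
    have hqpq : q ≠ p * q := by
      intro h; nlinarith [hq.two_le, hp.two_le]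
    have h1pq : 1 ≠ p * q := by
      intro h; nlinarith [hq.two_le, hp.two_le]
    rw [Finset.prod_insert (by simp [hp1.symm, hq1.symm, h1pq]),
      Finset.prod_insert (by simp [hne, hppq]),
      Finset.prod_insert (by simp [hqpq]), Finset.prod_singleton]
    ring
  rw [h1, h2, hprod, cyclotomic_one]
  ring

lemma ps_id {p q : ℕ} (hp : p.Prime) (hq : q.Prime) (hne : p ≠ q) :
    ((cyclotomic (p * q) ℤ : Polynomial ℤ) : PowerSeries ℤ) =
      (1 - PowerSeries.X ^ (p * q)) * (1 - PowerSeries.X) * (geomS p * geomS q) := by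
  have hcoe : ((cyclotomic (p * q) ℤ : Polynomial ℤ) : PowerSeries ℤ) *
      ((PowerSeries.X ^ p - 1) * (PowerSeries.X ^ q - 1)) =
      (PowerSeries.X ^ (p * q) - 1) * (PowerSeries.X - 1) := by
    have := congrArg (fun f : Polynomial ℤ => (f : PowerSeries ℤ)) (poly_id hp hq hne)
    simpa only [Polynomial.coe_mul, Polynomial.coe_sub, Polynomial.coe_pow,
      Polynomial.coe_X, Polynomial.coe_one] using this
  have hSp := one_sub_pow_mul_geomS p hp.pos
  have hSq := one_sub_pow_mul_geomS q hq.pos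
  calc ((cyclotomic (p * q) ℤ : Polynomial ℤ) : PowerSeries ℤ)
      = ((cyclotomic (p * q) ℤ : Polynomial ℤ) : PowerSeries ℤ) *
        (((1 - PowerSeries.X ^ p) * geomS p) * ((1 - PowerSeries.X ^ q) * geomS q)) := by
        rw [hSp, hSq]; ring
    _ = (((cyclotomic (p * q) ℤ : Polynomial ℤ) : PowerSeries ℤ) *
        ((PowerSeries.X ^ p - 1) * (PowerSeries.X ^ q - 1))) * (geomS p * geomS q) := by ring
    _ = ((PowerSeries.X ^ (p * q) - 1) * (PowerSeries.X - 1)) * (geomS p * geomS q) := by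
        rw [hcoe]
    _ = (1 - PowerSeries.X ^ (p * q)) * (1 - PowerSeries.X) * (geomS p * geomS q) := by ring

/-- number of representations `n = a + b` with `p ∣ a`, `q ∣ b` -/
def repCount (p q n : ℕ) : ℕ :=
  ((Finset.HasAntidiagonal.antidiagonal n).filter fun x => p ∣ x.1 ∧ q ∣ x.2).card

lemma coeff_geomS_mul (p q n : ℕ) :
    PowerSeries.coeff n (geomS p * geomS q) = (repCount p q n : ℤ) := by
  rw [PowerSeries.coeff_mul]
  simp only [geomS, PowerSeries.coeff_mk, ite_mul, one_mul, zero_mul]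
  rw [repCount]
  rw [← Finset.sum_boole]
  apply Finset.sum_congr rfl
  intro x _
  by_cases h1 : p ∣ x.1 <;> by_cases h2 : q ∣ x.2 <;> simp [h1, h2]

lemma repCount_le_one {p q : ℕ} (hp : p.Prime) (hq : q.Prime) (hne : p ≠ q)
    {n : ℕ} (hn : n < p * q) : repCount p q n ≤ 1 := by
  have hcop : IsCoprime (p : ℤ) (q : ℤ) :=
    Nat.isCoprime_iff_coprime.mpr ((Nat.coprime_primes hp hq).mpr hne)
  rw [repCount]
  apply Finset.card_le_one.mpr
  rintro ⟨a, b⟩ hab ⟨a', b'⟩ hab'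
  simp only [Finset.mem_filter, Finset.HasAntidiagonal.mem_antidiagonal] at hab hab'
  obtain ⟨hsum, hpa, hqb⟩ := hab
  obtain ⟨hsum', hpa', hqb'⟩ := hab'
  have hdp : (p : ℤ) ∣ ((a : ℤ) - a') := by
    exact_mod_cast dvd_sub (Int.natCast_dvd_natCast.mpr hpa) (Int.natCast_dvd_natCast.mpr hpa')
  have hdq : (q : ℤ) ∣ ((a : ℤ) - a') := by
    have : (a : ℤ) - a' = (b' : ℤ) - b := by
      have h1 : (a : ℤ) + b = n := by exact_mod_cast hsum
      have h2 : (a' : ℤ) + b' = n := by exact_mod_cast hsum'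
      linarith
    rw [this]
    exact dvd_sub (Int.natCast_dvd_natCast.mpr hqb') (Int.natCast_dvd_natCast.mpr hqb)
  have hdpq : ((p * q : ℕ) : ℤ) ∣ ((a : ℤ) - a') := by
    push_cast
    exact hcop.mul_dvd hdp hdq
  have hzero : (a : ℤ) - a' = 0 := by
    apply Int.eq_zero_of_abs_lt_dvd hdpq
    have ha : a ≤ n := by omega
    have ha' : a' ≤ n := by omega
    have hn' : (n : ℤ) < ((p * q : ℕ) : ℤ) := by exact_mod_cast hn
    have haz : (a : ℤ) ≤ n := by exact_mod_cast ha
    have haz' : (a' : ℤ) ≤ n := by exact_mod_cast ha'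
    have h0 : (0 : ℤ) ≤ a := Int.ofNat_nonneg a
    have h0' : (0 : ℤ) ≤ a' := Int.ofNat_nonneg a'
    rw [abs_sub_lt_iff]
    constructor <;> linarith
  have haa : a = a' := by omega
  have : b = b' := by omega
  simp [haa, this]

lemma coeff_bound {p q : ℕ} (hp : p.Prime) (hq : q.Prime) (hne : p ≠ q) (n : ℕ) :
    ((cyclotomic (p * q) ℤ).coeff n).natAbs ≤ 1 := by
  by_cases hn : n < p * q
  · have hc : (cyclotomic (p * q) ℤ).coeff n =
        PowerSeries.coeff n ((cyclotomic (p * q) ℤ : Polynomial ℤ) : PowerSeries ℤ) :=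
      (Polynomial.coeff_coe _ _).symm
    rw [hc, ps_id hp hq hne]
    have hexp : (1 - PowerSeries.X ^ (p * q)) * (1 - PowerSeries.X) * (geomS p * geomS q)
        = (geomS p * geomS q) - PowerSeries.X ^ 1 * (geomS p * geomS q)
          - PowerSeries.X ^ (p * q) * (geomS p * geomS q)
          + PowerSeries.X ^ (p * q + 1) * (geomS p * geomS q) := by ring
    rw [hexp, map_add, map_sub, map_sub, PowerSeries.coeff_X_pow_mul',
      PowerSeries.coeff_X_pow_mul', PowerSeries.coeff_X_pow_mul']
    rw [if_neg (show ¬ p * q ≤ n by omega), if_neg (show ¬ p * q + 1 ≤ n by omega)]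
    have h1 := repCount_le_one hp hq hne hn
    by_cases h2 : 1 ≤ n
    · rw [if_pos h2, coeff_geomS_mul, coeff_geomS_mul]
      have h3 := repCount_le_one hp hq hne (show n - 1 < p * q by omega)
      omega
    · rw [if_neg h2, coeff_geomS_mul]
      omega
  · have hdeg : (cyclotomic (p * q) ℤ).natDegree < n := by
      rw [natDegree_cyclotomic]
      have h2 : 1 < p * q := by nlinarith [hp.two_le, hq.two_le]
      have := Nat.totient_lt (p * q) h2
      omega
    rw [coeff_eq_zero_of_natDegree_lt hdeg]
    simp

theorem stmt2 (p q : ℕ) (hp : p.Prime) (hq : q.Prime) (hpo : Odd p) (hqo : Odd q)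
    (hne : p ≠ q) : cycHeight (Polynomial.cyclotomic (p * q) ℤ) = 1 := by
  unfold cycHeight
  apply le_antisymm
  · exact Finset.sup_le fun m _ => coeff_bound hp hq hne m
  · have hmono := cyclotomic.monic (p * q) ℤ
    have hne0 : cyclotomic (p * q) ℤ ≠ 0 := hmono.ne_zero
    have hmem : (cyclotomic (p * q) ℤ).natDegree ∈ (cyclotomic (p * q) ℤ).support :=
      natDegree_mem_support_of_nonzero hne0
    have h1 : ((cyclotomic (p * q) ℤ).coeff (cyclotomic (p * q) ℤ).natDegree).natAbs = 1 := by
      rw [hmono.coeff_natDegree]; rfl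
    calc 1 = ((cyclotomic (p * q) ℤ).coeff (cyclotomic (p * q) ℤ).natDegree).natAbs := h1.symm
      _ ≤ (cyclotomic (p * q) ℤ).support.sup (fun m => ((cyclotomic (p * q) ℤ).coeff m).natAbs) :=
        Finset.le_sup (f := fun m => ((cyclotomic (p * q) ℤ).coeff m).natAbs) hmem
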